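/- For a nonempty finite subset $A\subset\mathbb{Z}$ and $i\in\mathbb{Z}$, define $N(A,i)=\min\{j\in A: j\ge i\}$ whenever $i\le\max A$, and define $D_iA = A\setminus\{N(A,i)\}$ if $A\ne\emptyset$ and $i\le\max A$, and $D_iA=A$ otherwise. Then for all finite $A\subset\mathbb{Z}$ and all $i,j\in\mathbb{Z}$, $D_iD_jA = D_jD_iA$. -/

import Mathlib

/-- `Dop i A` removes from `A` the smallest element that is `≥ i`, if such an
element exists (equivalently, if `A` is nonempty and `i ≤ max A`); otherwise it
is the identity. -/
def Dop (i : ℤ) (A : Finset ℤ) : Finset ℤ :=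
  if h : (A.filter fun j => i ≤ j).Nonempty then
    A.erase ((A.filter fun j => i ≤ j).min' h)
  else A

private lemma min'_subset_eq {s t : Finset ℤ} (hts : t ⊆ s) (hs : s.Nonempty)
    (ht : t.Nonempty) (hmem : s.min' hs ∈ t) : t.min' ht = s.min' hs :=
  le_antisymm (t.min'_le _ hmem) (s.min'_le _ (hts (t.min'_mem ht)))

private lemma Dop_congr {i j : ℤ} {A : Finset ℤ}
    (h : (A.filter fun k => i ≤ k) = (A.filter fun k => j ≤ k)) :
    Dop i A = Dop j A := by
  unfold Dop
  by_cases hne : (A.filter fun k => i ≤ k).Nonempty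
  · have hne' : (A.filter fun k => j ≤ k).Nonempty := h ▸ hne
    rw [dif_pos hne, dif_pos hne']
    congr 1
    exact (min'_subset_eq h.ge hne hne'
      (by rw [← h]; exact Finset.min'_mem _ hne)).symm
  · have hne' : ¬ (A.filter fun k => j ≤ k).Nonempty := h ▸ hne
    rw [dif_neg hne, dif_neg hne']

private lemma key (A : Finset ℤ) {i j : ℤ} (hij : i ≤ j) :
    Dop i (Dop j A) = Dop j (Dop i A) := by
  by_cases hj : (A.filter fun k => j ≤ k).Nonempty
  · have hi : (A.filter fun k => i ≤ k).Nonempty :=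
      hj.mono (by intro a ha; rw [Finset.mem_filter] at *; exact ⟨ha.1, hij.trans ha.2⟩)
    set ni := (A.filter fun k => i ≤ k).min' hi with hnidef
    set nj := (A.filter fun k => j ≤ k).min' hj with hnjdef
    have hniF : ni ∈ A.filter fun k => i ≤ k := Finset.min'_mem _ hi
    have hnjF : nj ∈ A.filter fun k => j ≤ k := Finset.min'_mem _ hj
    have hniA : ni ∈ A := (Finset.mem_filter.mp hniF).1
    have hnjA : nj ∈ A := (Finset.mem_filter.mp hnjF).1
    have hjnj : j ≤ nj := (Finset.mem_filter.mp hnjF).2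
    have hinj : nj ∈ A.filter fun k => i ≤ k :=
      Finset.mem_filter.mpr ⟨hnjA, hij.trans hjnj⟩
    have hninj : ni ≤ nj := Finset.min'_le _ _ hinj
    have hDi : Dop i A = A.erase ni := dif_pos hi
    have hDj : Dop j A = A.erase nj := dif_pos hj
    rcases lt_or_ge ni j with hlt | hge
    · -- ni < j ≤ nj, so ni ≠ nj
      have hne : ni ≠ nj := by omega
      -- filter j of A.erase ni equals filter j of A
      have hfje : ((A.erase ni).filter fun k => j ≤ k) = A.filter fun k => j ≤ k := by
        rw [Finset.filter_erase]
        exact Finset.erase_eq_of_notMem (by simp; omega)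
      -- filter i of A.erase nj
      have hfie : ((A.erase nj).filter fun k => i ≤ k)
          = (A.filter fun k => i ≤ k).erase nj := by
        rw [Finset.filter_erase]
      have hfieN : ((A.erase nj).filter fun k => i ≤ k).Nonempty := by
        rw [hfie]
        exact ⟨ni, Finset.mem_erase.mpr ⟨hne, hniF⟩⟩
      have hmin : ((A.erase nj).filter fun k => i ≤ k).min' hfieN = ni := by
        apply min'_subset_eq (s := A.filter fun k => i ≤ k)
        · rw [hfie]; exact Finset.erase_subset _ _
        · rw [hfie]; exact Finset.mem_erase.mpr ⟨hne, hniF⟩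
      have hL : Dop i (Dop j A) = (A.erase nj).erase ni := by
        rw [hDj, Dop, dif_pos hfieN, hmin]
      have hfjeN : ((A.erase ni).filter fun k => j ≤ k).Nonempty := by
        rw [hfje]; exact hj
      have hmin2 : ((A.erase ni).filter fun k => j ≤ k).min' hfjeN = nj := by
        apply min'_subset_eq (s := A.filter fun k => j ≤ k)
        · rw [hfje]
        · rw [hfje]; exact hnjF
      have hR : Dop j (Dop i A) = (A.erase ni).erase nj := by
        rw [hDi, Dop, dif_pos hfjeN, hmin2]
      rw [hL, hR]
      ext a
      simp only [Finset.mem_erase]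
      exact ⟨fun ⟨h1, h2, h3⟩ => ⟨h2, h1, h3⟩, fun ⟨h1, h2, h3⟩ => ⟨h2, h1, h3⟩⟩
    · -- j ≤ ni : filters coincide
      have hfeq : (A.filter fun k => i ≤ k) = A.filter fun k => j ≤ k := by
        apply Finset.Subset.antisymm
        · intro a ha
          have h1 := Finset.min'_le _ a ha
          rw [Finset.mem_filter] at ha ⊢
          exact ⟨ha.1, by omega⟩
        · intro a ha
          rw [Finset.mem_filter] at *
          exact ⟨ha.1, hij.trans ha.2⟩
      have h1 : Dop i A = Dop j A := Dop_congr hfeq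
      have h2 : Dop i (Dop i A) = Dop j (Dop i A) := by
        apply Dop_congr
        rw [hDi, Finset.filter_erase, Finset.filter_erase, hfeq]
      rw [← h1, h2]
  · have hDj : Dop j A = A := dif_neg hj
    have hsub : Dop i A ⊆ A := by
      unfold Dop; split
      · exact Finset.erase_subset _ _
      · exact Finset.Subset.refl _
    have hj2 : ¬ ((Dop i A).filter fun k => j ≤ k).Nonempty := by
      intro ⟨x, hx⟩
      rw [Finset.mem_filter] at hx
      exact hj ⟨x, Finset.mem_filter.mpr ⟨hsub hx.1, hx.2⟩⟩
    have : Dop j (Dop i A) = Dop i A := dif_neg hj2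
    rw [hDj, this]

theorem stmt4 (A : Finset ℤ) (i j : ℤ) : Dop i (Dop j A) = Dop j (Dop i A) := by
  rcases le_total i j with h | h
  · exact key A h
  · exact (key A h).symm
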